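/- Let A_ρ ∈ ℝ^{d×d} be a Hurwitz-stable Metzler matrix, and let S_ct ∈ ℝ^{d×m}, W_ct ∈ ℝ^{m×d} be entrywise nonnegative. Then the matrix M := −W_ct A_ρ^{-1} S_ct is entrywise nonnegative, and det(I − D M) > 0 for all diagonal matrices D with positive diagonal entries if and only if the spectral radius ϱ(M) = 0. -/

import Mathlib

open Matrix Filter
open scoped ComplexOrder NNReal ENNReal Topology Pointwise

namespace Stmt12Helper

attribute [local instance] Matrix.linftyOpNormedAddCommGroup Matrix.linftyOpNormedRing
  Matrix.linftyOpNormedAlgebra Matrix.linftyOpNormedSpace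



variable {n : ℕ}

/-- entry is bounded by the linfty operator norm -/
lemma entry_nnnorm_le (X : Matrix (Fin n) (Fin n) ℂ) (i j : Fin n) : ‖X i j‖₊ ≤ ‖X‖₊ := by
  rw [Matrix.linfty_opNNNorm_def]
  refine le_trans ?_ (Finset.le_sup (Finset.mem_univ i))
  exact Finset.single_le_sum (f := fun j => ‖X i j‖₊) (fun _ _ => zero_le) (Finset.mem_univ j)

lemma nnnorm_le_of_entries_le {X Y : Matrix (Fin n) (Fin n) ℂ}
    (h : ∀ i j, ‖X i j‖₊ ≤ ‖Y i j‖₊) : ‖X‖₊ ≤ ‖Y‖₊ := by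
  rw [Matrix.linfty_opNNNorm_def, Matrix.linfty_opNNNorm_def]
  exact Finset.sup_mono_fun fun i _ => Finset.sum_le_sum fun j _ => h i j

/-- the matrix ring hom from real to complex matrices -/
noncomputable def φ : Matrix (Fin n) (Fin n) ℝ →+* Matrix (Fin n) (Fin n) ℂ :=
  (Complex.ofRealHom : ℝ →+* ℂ).mapMatrix

lemma φ_apply (P : Matrix (Fin n) (Fin n) ℝ) : φ P = P.map Complex.ofReal := rfl

lemma map_pow_comm (P : Matrix (Fin n) (Fin n) ℝ) (k : ℕ) :
    (P.map Complex.ofReal) ^ k = (P ^ k).map Complex.ofReal := by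
  rw [← φ_apply, ← φ_apply, ← map_pow]

lemma entries_pow_nonneg {P : Matrix (Fin n) (Fin n) ℝ} (hP : ∀ i j, 0 ≤ P i j) (k : ℕ) :
    ∀ i j, 0 ≤ (P ^ k) i j := by
  induction k with
  | zero => intro i j; by_cases h : i = j <;> simp [pow_zero, Matrix.one_apply, h]
  | succ k ih =>
    intro i j
    rw [pow_succ, Matrix.mul_apply]
    exact Finset.sum_nonneg fun l _ => mul_nonneg (ih i l) (hP l j)

lemma entries_pow_le {P Q : Matrix (Fin n) (Fin n) ℝ} (hP : ∀ i j, 0 ≤ P i j)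
    (hPQ : ∀ i j, P i j ≤ Q i j) (k : ℕ) : ∀ i j, (P ^ k) i j ≤ (Q ^ k) i j := by
  induction k with
  | zero => intro i j; simp [pow_zero]
  | succ k ih =>
    intro i j
    rw [pow_succ, pow_succ, Matrix.mul_apply, Matrix.mul_apply]
    refine Finset.sum_le_sum fun l _ => ?_
    have h1 : 0 ≤ (P ^ k) i l := entries_pow_nonneg hP k i l
    have h2 : 0 ≤ P l j := hP l j
    exact mul_le_mul (ih i l) (hPQ l j) h2 ((h1.trans (ih i l)))


lemma nnnorm_map_entry (P : Matrix (Fin n) (Fin n) ℝ) (i j : Fin n) :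
    ‖(P.map Complex.ofReal) i j‖₊ = ‖P i j‖₊ := by
  simp [Matrix.map_apply]

/-- spectral radius monotone for entrywise-dominated nonneg real matrices -/
lemma spectralRadius_mono {P Q : Matrix (Fin n) (Fin n) ℝ} (hP : ∀ i j, 0 ≤ P i j)
    (hPQ : ∀ i j, P i j ≤ Q i j) :
    spectralRadius ℂ (P.map Complex.ofReal) ≤ spectralRadius ℂ (Q.map Complex.ofReal) := by
  have key : ∀ k : ℕ, ‖(P.map Complex.ofReal) ^ k‖₊ ≤ ‖(Q.map Complex.ofReal) ^ k‖₊ := by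
    intro k
    rw [map_pow_comm, map_pow_comm]
    refine nnnorm_le_of_entries_le fun i j => ?_
    rw [nnnorm_map_entry, nnnorm_map_entry]
    have h1 := entries_pow_nonneg hP k i j
    have h2 := entries_pow_le hP hPQ k i j
    simp only [← NNReal.coe_le_coe, coe_nnnorm, Real.norm_eq_abs]
    rw [abs_of_nonneg h1, abs_of_nonneg (h1.trans h2)]
    exact h2
  calc spectralRadius ℂ (P.map Complex.ofReal)
      ≤ atTop.liminf fun k : ℕ => (‖(P.map Complex.ofReal) ^ k‖₊ : ℝ≥0∞) ^ (1 / k : ℝ) :=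
        spectrum.spectralRadius_le_liminf_pow_nnnorm_pow_one_div ℂ _
    _ ≤ atTop.liminf fun k : ℕ => (‖(Q.map Complex.ofReal) ^ k‖₊ : ℝ≥0∞) ^ (1 / k : ℝ) := by
        refine Filter.liminf_le_liminf (Filter.Eventually.of_forall fun k => ?_)
        exact ENNReal.rpow_le_rpow (by exact_mod_cast key k) (by positivity)
    _ = spectralRadius ℂ (Q.map Complex.ofReal) :=
        (spectrum.pow_nnnorm_pow_one_div_tendsto_nhds_spectralRadius _).liminf_eq

/-- spectral radius of scalar multiple bounded -/
lemma spectralRadius_smul_le (c : ℂ) (X : Matrix (Fin n) (Fin n) ℂ) :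
    spectralRadius ℂ (c • X) ≤ (‖c‖₊ : ℝ≥0∞) * spectralRadius ℂ X := by
  calc spectralRadius ℂ (c • X)
      ≤ atTop.liminf fun k : ℕ => (‖(c • X) ^ k‖₊ : ℝ≥0∞) ^ (1 / k : ℝ) :=
        spectrum.spectralRadius_le_liminf_pow_nnnorm_pow_one_div ℂ _
    _ ≤ (‖c‖₊ : ℝ≥0∞) * spectralRadius ℂ X := by
        have h1 : Tendsto (fun k : ℕ => (‖c‖₊ : ℝ≥0∞) * (‖X ^ k‖₊ : ℝ≥0∞) ^ (1 / k : ℝ)) atTop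
            (𝓝 ((‖c‖₊ : ℝ≥0∞) * spectralRadius ℂ X)) := by
          exact ENNReal.Tendsto.const_mul
            (spectrum.pow_nnnorm_pow_one_div_tendsto_nhds_spectralRadius X)
            (Or.inr ENNReal.coe_ne_top)
        rw [← h1.liminf_eq]
        refine Filter.liminf_le_liminf ?_
        filter_upwards [Filter.eventually_gt_atTop 0] with k hk
        have : (c • X) ^ k = c ^ k • X ^ k := smul_pow c X k
        rw [this]
        have hb : ‖c ^ k • X ^ k‖₊ ≤ ‖c‖₊ ^ k * ‖X ^ k‖₊ := by
          rw [nnnorm_smul]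
          exact mul_le_mul_left (nnnorm_pow_le' c hk) _
        calc (‖c ^ k • X ^ k‖₊ : ℝ≥0∞) ^ (1 / k : ℝ)
            ≤ ((‖c‖₊ ^ k * ‖X ^ k‖₊ : ℝ≥0) : ℝ≥0∞) ^ (1 / k : ℝ) :=
              ENNReal.rpow_le_rpow (by exact_mod_cast hb) (by positivity)
          _ = ((‖c‖₊ : ℝ≥0∞) ^ (k : ℕ)) ^ (1 / k : ℝ) * (‖X ^ k‖₊ : ℝ≥0∞) ^ (1 / k : ℝ) := by
              rw [ENNReal.coe_mul, ENNReal.mul_rpow_of_nonneg _ _ (by positivity), ENNReal.coe_pow]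
          _ = (‖c‖₊ : ℝ≥0∞) * (‖X ^ k‖₊ : ℝ≥0∞) ^ (1 / k : ℝ) := by
              rw [← ENNReal.rpow_natCast, ← ENNReal.rpow_mul]
              congr 1
              rw [mul_one_div, div_self (by exact_mod_cast hk.ne')]
              exact ENNReal.rpow_one _


/-- Neumann series when the spectral radius is < 1 -/
lemma neumann {X : Matrix (Fin n) (Fin n) ℂ} (h : spectralRadius ℂ X < 1) :
    ∃ T : Matrix (Fin n) (Fin n) ℂ, HasSum (fun k => X ^ k) T ∧
      (1 - X) * T = 1 ∧ T * (1 - X) = 1 ∧ Summable fun k => ‖X ^ k‖ := by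
  obtain ⟨r, hr1, hr2⟩ := ENNReal.lt_iff_exists_nnreal_btwn.mp h
  have hr2' : (r : ℝ) < 1 := by exact_mod_cast hr2
  have hgel := spectrum.pow_nnnorm_pow_one_div_tendsto_nhds_spectralRadius X
  have hev : ∀ᶠ k : ℕ in atTop, (‖X ^ k‖₊ : ℝ≥0∞) ^ (1 / k : ℝ) < (r : ℝ≥0∞) :=
    hgel.eventually_lt_const hr1
  have hbound : ∀ᶠ k : ℕ in atTop, ‖X ^ k‖ ≤ (r : ℝ) ^ k := by
    filter_upwards [hev, Filter.eventually_gt_atTop 0] with k hk hk0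
    have h1 : ((‖X ^ k‖₊ : ℝ≥0∞) ^ (1 / k : ℝ)) ^ (k : ℝ) ≤ ((r : ℝ≥0∞)) ^ (k : ℝ) :=
      ENNReal.rpow_le_rpow hk.le (by positivity)
    rw [← ENNReal.rpow_mul, one_div, inv_mul_cancel₀ (by exact_mod_cast hk0.ne'),
      ENNReal.rpow_one] at h1
    have h2 : (‖X ^ k‖₊ : ℝ≥0∞) ≤ (r : ℝ≥0∞) ^ (k : ℕ) := by
      rw [← ENNReal.rpow_natCast]; exact h1
    rw [← ENNReal.coe_pow, ENNReal.coe_le_coe] at h2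
    calc ‖X ^ k‖ = ((‖X ^ k‖₊ : ℝ≥0) : ℝ) := rfl
      _ ≤ ((r ^ k : ℝ≥0) : ℝ) := by exact_mod_cast h2
      _ = (r : ℝ) ^ k := by push_cast; ring
  have hsum_norm : Summable fun k => ‖X ^ k‖ := by
    refine Summable.of_norm_bounded_eventually_nat
      (summable_geometric_of_lt_one r.coe_nonneg hr2') ?_
    filter_upwards [hbound] with k hk
    rwa [Real.norm_eq_abs, abs_of_nonneg (norm_nonneg _)]
  have hsum : Summable fun k => X ^ k := Summable.of_norm hsum_norm
  obtain ⟨T, hT⟩ := hsum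
  have hpow0 : Tendsto (fun k : ℕ => X ^ k) atTop (𝓝 0) := by
    refine squeeze_zero_norm' hbound ?_
    exact tendsto_pow_atTop_nhds_zero_of_lt_one r.coe_nonneg hr2'
  have key : ∀ Y : Matrix (Fin n) (Fin n) ℂ,
      (∀ k : ℕ, Y * X ^ k = X ^ k - X ^ (k + 1)) → ∀ Z, HasSum (fun k => Y * X ^ k) Z → Z = 1 := by
    intro Y hY Z hZ
    have h1 : Tendsto (fun N : ℕ => ∑ k ∈ Finset.range N, Y * X ^ k) atTop (𝓝 Z) :=
      hZ.tendsto_sum_nat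
    have h2 : ∀ N : ℕ, ∑ k ∈ Finset.range N, Y * X ^ k = X ^ 0 - X ^ N := by
      intro N
      simp_rw [hY]
      exact Finset.sum_range_sub' (fun k => X ^ k) N
    simp_rw [h2, pow_zero] at h1
    have h3 : Tendsto (fun N : ℕ => (1 : Matrix (Fin n) (Fin n) ℂ) - X ^ N) atTop (𝓝 (1 - 0)) :=
      tendsto_const_nhds.sub hpow0
    rw [sub_zero] at h3
    exact tendsto_nhds_unique h1 h3
  have hleft : (1 - X) * T = 1 := by
    refine key (1 - X) (fun k => by rw [sub_mul, one_mul, pow_succ']) _ (hT.mul_left (1 - X))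
  have hright : T * (1 - X) = 1 := by
    have h1 : HasSum (fun k => X ^ k * (1 - X)) (T * (1 - X)) := hT.mul_right (1 - X)
    have h2 : ∀ k : ℕ, X ^ k * (1 - X) = X ^ k - X ^ (k + 1) := fun k => by
      rw [mul_sub, mul_one, pow_succ]
    have h3 : Tendsto (fun N : ℕ => ∑ k ∈ Finset.range N, X ^ k * (1 - X)) atTop
        (𝓝 (T * (1 - X))) := h1.tendsto_sum_nat
    have h4 : ∀ N : ℕ, ∑ k ∈ Finset.range N, X ^ k * (1 - X) = X ^ 0 - X ^ N := by
      intro N; simp_rw [h2]; exact Finset.sum_range_sub' (fun k => X ^ k) N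
    simp_rw [h4, pow_zero] at h3
    have h5 : Tendsto (fun N : ℕ => (1 : Matrix (Fin n) (Fin n) ℂ) - X ^ N) atTop (𝓝 (1 - 0)) :=
      tendsto_const_nhds.sub hpow0
    rw [sub_zero] at h5
    exact tendsto_nhds_unique h3 h5
  exact ⟨T, hT, hleft, hright, hsum_norm⟩


lemma spectralRadius_inv_smul_lt_one {X : Matrix (Fin n) (Fin n) ℂ} {z : ℂ}
    (hz : spectralRadius ℂ X < (‖z‖₊ : ℝ≥0∞)) : spectralRadius ℂ (z⁻¹ • X) < 1 := by
  have hz0 : z ≠ 0 := by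
    rintro rfl
    simp at hz
  have hzn : (‖z‖₊ : ℝ≥0∞) ≠ 0 := by simpa using hz0
  have hle : spectralRadius ℂ (z⁻¹ • X) ≤ spectralRadius ℂ X / (‖z‖₊ : ℝ≥0∞) := by
    refine iSup₂_le fun μ hμ => ?_
    have hmem : μ ∈ (Units.mk0 z⁻¹ (inv_ne_zero hz0)) • spectrum ℂ X := by
      rwa [← spectrum.unit_smul_eq_smul]
    obtain ⟨ν, hν, rfl⟩ := hmem
    have hνle : (‖ν‖₊ : ℝ≥0∞) ≤ spectralRadius ℂ X := le_iSup₂ (α := ℝ≥0∞) ν hν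
    have : ‖(Units.mk0 z⁻¹ (inv_ne_zero hz0) : ℂ) • ν‖₊ = ‖z‖₊⁻¹ * ‖ν‖₊ := by
      simp [Units.smul_def, nnnorm_smul]
    rw [this]
    rw [ENNReal.div_eq_inv_mul, ENNReal.coe_mul, ENNReal.coe_inv (by simpa using hz0)]
    exact mul_le_mul_right hνle _
  refine lt_of_le_of_lt hle ?_
  rw [ENNReal.div_lt_iff (Or.inl hzn) (Or.inl ENNReal.coe_ne_top), one_mul]
  exact hz

lemma resolvent_series {X : Matrix (Fin n) (Fin n) ℂ} {z : ℂ}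
    (hz : spectralRadius ℂ X < (‖z‖₊ : ℝ≥0∞)) :
    IsUnit (algebraMap ℂ (Matrix (Fin n) (Fin n) ℂ) z - X) ∧
      HasSum (fun k => z⁻¹ ^ (k + 1) • X ^ k)
        (Ring.inverse (algebraMap ℂ (Matrix (Fin n) (Fin n) ℂ) z - X)) := by
  have hz0 : z ≠ 0 := by rintro rfl; simp at hz
  set Y := z⁻¹ • X with hY
  obtain ⟨T, hT, hl, hr, _⟩ := neumann (spectralRadius_inv_smul_lt_one hz)
  have hkey : algebraMap ℂ (Matrix (Fin n) (Fin n) ℂ) z - X = z • (1 - Y) := by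
    rw [smul_sub, hY, smul_smul, mul_inv_cancel₀ hz0, one_smul,
      Algebra.algebraMap_eq_smul_one]
  have hu1 : (algebraMap ℂ (Matrix (Fin n) (Fin n) ℂ) z - X) * (z⁻¹ • T) = 1 := by
    rw [hkey, smul_mul_assoc, mul_smul_comm, smul_smul, mul_inv_cancel₀ hz0, one_smul, hl]
  have hu2 : (z⁻¹ • T) * (algebraMap ℂ (Matrix (Fin n) (Fin n) ℂ) z - X) = 1 := by
    rw [hkey, smul_mul_assoc, mul_smul_comm, smul_smul, inv_mul_cancel₀ hz0, one_smul, hr]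
  let u : (Matrix (Fin n) (Fin n) ℂ)ˣ :=
    ⟨algebraMap ℂ (Matrix (Fin n) (Fin n) ℂ) z - X, z⁻¹ • T, hu1, hu2⟩
  have hinv : Ring.inverse (algebraMap ℂ (Matrix (Fin n) (Fin n) ℂ) z - X) = z⁻¹ • T := by
    have := Ring.inverse_unit u
    simpa [u] using this
  refine ⟨u.isUnit, ?_⟩
  rw [hinv]
  have h1 : HasSum (fun k => z⁻¹ • Y ^ k) (z⁻¹ • T) := hT.const_smul z⁻¹
  convert h1 using 2 with k
  rw [hY, smul_pow, smul_smul, pow_succ']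

/-- the entry continuous linear map -/
noncomputable def entryCLM (i j : Fin n) : Matrix (Fin n) (Fin n) ℂ →L[ℂ] ℂ :=
  LinearMap.mkContinuous
    { toFun := fun X => X i j
      map_add' := fun X Y => rfl
      map_smul' := fun c X => rfl } 1
    (fun X => by show ‖X i j‖ ≤ 1 * ‖X‖; rw [one_mul]; exact_mod_cast (entry_nnnorm_le X i j : ‖X i j‖₊ ≤ ‖X‖₊))

lemma entryCLM_apply (i j : Fin n) (X : Matrix (Fin n) (Fin n) ℂ) : entryCLM i j X = X i j := rfl


/-- resolvent entries of a nonneg real matrix at a real point `s > ρ`: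
nonneg entries, and domination of complex resolvent entries. -/
lemma resolvent_entries {P : Matrix (Fin n) (Fin n) ℝ} (hP : ∀ i j, 0 ≤ P i j) {s : ℝ}
    (hs : spectralRadius ℂ (P.map Complex.ofReal) < (‖(s : ℂ)‖₊ : ℝ≥0∞)) (hs0 : 0 < s) :
    ∀ i j, ∃ t : ℝ, 0 ≤ t ∧
      (Ring.inverse (algebraMap ℂ (Matrix (Fin n) (Fin n) ℂ) (s : ℂ) - P.map Complex.ofReal)) i j
        = (t : ℂ) ∧
      HasSum (fun k : ℕ => s⁻¹ ^ (k + 1) * (P ^ k) i j) t := by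
  obtain ⟨-, hsum⟩ := resolvent_series hs
  intro i j
  have hentry := (entryCLM i j).hasSum hsum
  simp only [_root_.map_smul, entryCLM_apply, smul_eq_mul] at hentry
  -- each term is real
  have hterm : ∀ k : ℕ, ((s : ℂ)⁻¹ ^ (k + 1) * ((P.map Complex.ofReal) ^ k) i j)
      = ((s⁻¹ ^ (k + 1) * (P ^ k) i j : ℝ) : ℂ) := by
    intro k
    rw [map_pow_comm]
    push_cast
    rfl
  simp_rw [hterm] at hentry
  -- extract a real sum
  have hre := Complex.reCLM.hasSum hentry
  simp only [Complex.reCLM_apply, Complex.ofReal_re] at hre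
  have him := Complex.imCLM.hasSum hentry
  simp only [Complex.imCLM_apply, Complex.ofReal_im] at him
  refine ⟨_, ?_, ?_, hre⟩
  · have : ∀ k : ℕ, 0 ≤ s⁻¹ ^ (k + 1) * (P ^ k) i j := fun k =>
      mul_nonneg (pow_nonneg (inv_nonneg.mpr hs0.le) _) (entries_pow_nonneg hP k i j)
    exact hre.nonneg this
  · have himz : (Ring.inverse (algebraMap ℂ (Matrix (Fin n) (Fin n) ℂ) (s : ℂ)
        - P.map Complex.ofReal) i j).im = 0 := him.unique hasSum_zero
    exact Complex.ext rfl himz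

/-- the complex resolvent is entrywise dominated in norm by the resolvent at `s = ‖z‖`. -/
lemma resolvent_dominated {P : Matrix (Fin n) (Fin n) ℝ} (hP : ∀ i j, 0 ≤ P i j) {z : ℂ}
    (hz : spectralRadius ℂ (P.map Complex.ofReal) < (‖z‖₊ : ℝ≥0∞)) :
    ‖Ring.inverse (algebraMap ℂ (Matrix (Fin n) (Fin n) ℂ) z - P.map Complex.ofReal)‖₊ ≤
      ‖Ring.inverse (algebraMap ℂ (Matrix (Fin n) (Fin n) ℂ) (‖z‖ : ℂ) - P.map Complex.ofReal)‖₊ := by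
  have hz0 : z ≠ 0 := by rintro rfl; simp at hz
  have hs0 : 0 < ‖z‖ := norm_pos_iff.mpr hz0
  have hnz : (‖(‖z‖ : ℂ)‖₊ : ℝ≥0∞) = (‖z‖₊ : ℝ≥0∞) := by
    congr 1
    ext
    simp [coe_nnnorm, Complex.norm_real, abs_of_nonneg (norm_nonneg z)]
  have hs : spectralRadius ℂ (P.map Complex.ofReal) < (‖(‖z‖ : ℂ)‖₊ : ℝ≥0∞) := by rw [hnz]; exact hz
  refine nnnorm_le_of_entries_le fun i j => ?_
  obtain ⟨t, ht0, hteq, htsum⟩ := resolvent_entries hP hs hs0 i j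
  obtain ⟨-, hsumz⟩ := resolvent_series hz
  have hentry := (entryCLM i j).hasSum hsumz
  simp only [_root_.map_smul, entryCLM_apply, smul_eq_mul] at hentry
  -- norm bound for the z-entry
  have hnorms : ∀ k : ℕ, ‖z⁻¹ ^ (k + 1) * ((P.map Complex.ofReal) ^ k) i j‖
      = ‖z‖⁻¹ ^ (k + 1) * ‖(P ^ k) i j‖ := by
    intro k
    rw [map_pow_comm, norm_mul, norm_pow, norm_inv]
    congr 1
    simp [Matrix.map_apply]
  have hsummable : Summable fun k : ℕ => ‖z⁻¹ ^ (k + 1) * ((P.map Complex.ofReal) ^ k) i j‖ := by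
    refine Summable.of_nonneg_of_le (fun k => norm_nonneg _) (fun k => ?_) htsum.summable
    rw [hnorms k]
    have : ‖(P ^ k) i j‖ = (P ^ k) i j := by
      rw [Real.norm_eq_abs, abs_of_nonneg (entries_pow_nonneg hP k i j)]
    rw [this]
  have hb : ‖Ring.inverse (algebraMap ℂ (Matrix (Fin n) (Fin n) ℂ) z - P.map Complex.ofReal) i j‖
      ≤ t := by
    have h1 := hentry.tsum_eq
    rw [← h1]
    refine le_trans (norm_tsum_le_tsum_norm hsummable) ?_
    rw [← htsum.tsum_eq]
    refine Summable.tsum_le_tsum (fun k => ?_) hsummable htsum.summable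
    rw [hnorms k]
    rw [Real.norm_eq_abs, abs_of_nonneg (entries_pow_nonneg hP k i j)]
  rw [← NNReal.coe_le_coe, coe_nnnorm, coe_nnnorm, hteq]
  calc ‖Ring.inverse (algebraMap ℂ (Matrix (Fin n) (Fin n) ℂ) z - P.map Complex.ofReal) i j‖
      ≤ t := hb
    _ = ‖(t : ℂ)‖ := by rw [Complex.norm_real, Real.norm_eq_abs, abs_of_nonneg ht0]


/-- lower bound on the resolvent norm near the spectrum -/
lemma one_le_dist_mul_resolvent {X : Matrix (Fin n) (Fin n) ℂ} {lam z : ℂ}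
    (hlam : lam ∈ spectrum ℂ X)
    (hz : IsUnit (algebraMap ℂ (Matrix (Fin n) (Fin n) ℂ) z - X)) :
    1 ≤ ‖z - lam‖ * ‖Ring.inverse (algebraMap ℂ (Matrix (Fin n) (Fin n) ℂ) z - X)‖ := by
  by_contra hcon
  push_neg at hcon
  set R := Ring.inverse (algebraMap ℂ (Matrix (Fin n) (Fin n) ℂ) z - X) with hR
  have hnorm : ‖(z - lam) • R‖ < 1 := by
    rw [norm_smul]
    exact hcon
  have hu2 : IsUnit (1 - (z - lam) • R) := (Units.oneSub _ hnorm).isUnit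
  have hfact : algebraMap ℂ (Matrix (Fin n) (Fin n) ℂ) lam - X =
      (algebraMap ℂ (Matrix (Fin n) (Fin n) ℂ) z - X) * (1 - (z - lam) • R) := by
    rw [mul_sub, mul_one, mul_smul_comm, Ring.mul_inverse_cancel _ hz]
    rw [Algebra.algebraMap_eq_smul_one z, Algebra.algebraMap_eq_smul_one lam, sub_smul]
    abel
  exact (spectrum.mem_iff.mp hlam) (hfact ▸ hz.mul hu2)

/-- weak Perron-Frobenius: for an entrywise nonneg real matrix with nonzero spectral radius,
the spectral radius is attained at a positive real element of the spectrum -/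
lemma perron_frobenius {P : Matrix (Fin n) (Fin n) ℝ} (hP : ∀ i j, 0 ≤ P i j)
    (h0 : spectralRadius ℂ (P.map Complex.ofReal) ≠ 0) :
    0 < (spectralRadius ℂ (P.map Complex.ofReal)).toReal ∧
      (((spectralRadius ℂ (P.map Complex.ofReal)).toReal : ℂ)) ∈
        spectrum ℂ (P.map Complex.ofReal) := by
  set Xc := P.map Complex.ofReal with hXc
  have hne : (spectrum ℂ Xc).Nonempty := by
    by_contra hemp
    rw [Set.not_nonempty_iff_eq_empty] at hemp
    apply h0
    simp [spectralRadius, hemp]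
  obtain ⟨lam, hlam, hlamr⟩ := spectrum.exists_nnnorm_eq_spectralRadius_of_nonempty hne
  set r : ℝ := ‖lam‖ with hrdef
  have hrtop : spectralRadius ℂ Xc ≠ ⊤ := by rw [← hlamr]; exact ENNReal.coe_ne_top
  have htoReal : (spectralRadius ℂ Xc).toReal = r := by
    rw [← hlamr]; simp [hrdef, coe_nnnorm]
  have hr0 : 0 < r := by
    rcases (norm_nonneg lam).lt_or_eq with h | h
    · exact h
    · exfalso; apply h0; rw [← hlamr]
      have h2 : ‖lam‖₊ = 0 := by ext; simp [← h]
      simp [h2]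
  rw [htoReal]
  refine ⟨hr0, ?_⟩
  by_contra hcon
  -- continuity of the resolvent at r
  have hrunit : IsUnit (algebraMap ℂ (Matrix (Fin n) (Fin n) ℂ) (r : ℂ) - Xc) :=
    spectrum.notMem_iff.mp hcon
  have hcont : ContinuousAt (fun s : ℝ =>
      Ring.inverse (algebraMap ℂ (Matrix (Fin n) (Fin n) ℂ) (s : ℂ) - Xc)) r := by
    have h1 : Continuous (fun s : ℝ => algebraMap ℂ (Matrix (Fin n) (Fin n) ℂ) (s : ℂ) - Xc) :=
      ((continuous_algebraMap ℂ (Matrix (Fin n) (Fin n) ℂ)).comp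
        Complex.continuous_ofReal).sub continuous_const
    have h2 : ContinuousAt Ring.inverse
        (algebraMap ℂ (Matrix (Fin n) (Fin n) ℂ) (r : ℂ) - Xc) := by
      have h3 := NormedRing.inverse_continuousAt hrunit.unit
      rwa [IsUnit.unit_spec] at h3
    exact ContinuousAt.comp (x := r) h2 h1.continuousAt
  -- the sequences
  set sseq : ℕ → ℝ := fun k => r * (1 + 1 / (k + 1)) with hsseq
  have hstend : Tendsto sseq atTop (𝓝 r) := by
    have h1 : Tendsto (fun k : ℕ => 1 + 1 / ((k : ℝ) + 1)) atTop (𝓝 (1 + 0)) :=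
      tendsto_const_nhds.add (tendsto_one_div_add_atTop_nhds_zero_nat)
    rw [add_zero] at h1
    simpa [hsseq, mul_one] using tendsto_const_nhds.mul h1
  have hnorm_tend : Tendsto (fun k => ‖Ring.inverse
      (algebraMap ℂ (Matrix (Fin n) (Fin n) ℂ) ((sseq k : ℝ) : ℂ) - Xc)‖) atTop
      (𝓝 ‖Ring.inverse (algebraMap ℂ (Matrix (Fin n) (Fin n) ℂ) (r : ℂ) - Xc)‖) :=
    ((hcont.tendsto.comp hstend).norm)
  set C : ℝ := ‖Ring.inverse (algebraMap ℂ (Matrix (Fin n) (Fin n) ℂ) (r : ℂ) - Xc)‖ with hC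
  have hev : ∀ᶠ k : ℕ in atTop, ‖Ring.inverse
      (algebraMap ℂ (Matrix (Fin n) (Fin n) ℂ) ((sseq k : ℝ) : ℂ) - Xc)‖ ≤ C + 1 := by
    filter_upwards [hnorm_tend.eventually_le_const (lt_add_of_pos_right C one_pos)] with k hk
    exact hk
  -- lower bound: norm of resolvent at z k is at least (k+1)/r
  have hlower : ∀ k : ℕ, (k + 1 : ℝ) / r ≤ ‖Ring.inverse
      (algebraMap ℂ (Matrix (Fin n) (Fin n) ℂ) ((sseq k : ℝ) : ℂ) - Xc)‖ := by
    intro k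
    set z : ℂ := lam * (1 + 1 / (k + 1)) with hzdef
    have hfac : (0 : ℝ) < 1 + 1 / ((k : ℝ) + 1) := by positivity
    have hznorm : ‖z‖ = sseq k := by
      rw [hzdef, norm_mul]
      rw [show ((1 : ℂ) + 1 / (k + 1)) = (((1 + 1 / (k + 1) : ℝ)) : ℂ) by push_cast; ring]
      rw [Complex.norm_real, Real.norm_eq_abs, abs_of_pos hfac, ← hrdef]
    have hρz : spectralRadius ℂ Xc < (‖z‖₊ : ℝ≥0∞) := by
      rw [← hlamr]
      rw [ENNReal.coe_lt_coe]
      have : ‖z‖ > ‖lam‖ := by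
        rw [hznorm, hsseq]
        have : r * 1 < r * (1 + 1 / (k + 1)) := by
          refine mul_lt_mul_of_pos_left ?_ hr0
          simp only [lt_add_iff_pos_right]
          positivity
        simpa using this
      exact_mod_cast this
    -- domination
    have hdom := resolvent_dominated hP hρz
    obtain ⟨hzunit, -⟩ := resolvent_series hρz
    have hlb := one_le_dist_mul_resolvent hlam hzunit
    have hzlam : ‖z - lam‖ = r / (k + 1) := by
      rw [hzdef]
      have : lam * (1 + 1 / (k + 1)) - lam = lam * (1 / (k + 1)) := by ring
      rw [this, norm_mul]
      rw [show ((1 : ℂ) / (k + 1)) = (((1 / (k + 1) : ℝ)) : ℂ) by push_cast; ring]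
      rw [Complex.norm_real, Real.norm_eq_abs,
        abs_of_pos (show (0:ℝ) < 1 / ((k:ℝ) + 1) by positivity), ← hrdef, mul_one_div]
    rw [hzlam] at hlb
    have h2 : (k + 1 : ℝ) / r ≤ ‖Ring.inverse (algebraMap ℂ (Matrix (Fin n) (Fin n) ℂ) z - Xc)‖ := by
      rw [div_le_iff₀ hr0]
      have hk1 : (0:ℝ) < (k:ℝ) + 1 := by positivity
      rw [div_mul_eq_mul_div, le_div_iff₀ hk1, one_mul] at hlb
      linarith
    refine h2.trans ?_
    have : ((sseq k : ℝ) : ℂ) = ((‖z‖ : ℝ) : ℂ) := by rw [hznorm]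
    rw [this]
    exact_mod_cast hdom
  -- contradiction
  obtain ⟨k, hk1, hk2⟩ : ∃ k : ℕ, ‖Ring.inverse
      (algebraMap ℂ (Matrix (Fin n) (Fin n) ℂ) ((sseq k : ℝ) : ℂ) - Xc)‖ ≤ C + 1 ∧
      (C + 1) * r < k + 1 := by
    obtain ⟨k, hk⟩ := ((hev.and (Filter.eventually_gt_atTop ⌈(C + 1) * r⌉₊)).exists)
    refine ⟨k, hk.1, lt_of_le_of_lt (Nat.le_ceil _) ?_⟩
    exact_mod_cast Nat.lt_succ_of_lt hk.2
  have := (hlower k).trans hk1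
  rw [div_le_iff₀ hr0] at this
  nlinarith

lemma hurwitz_metzler_inv {d : ℕ} {A : Matrix (Fin d) (Fin d) ℝ}
    (hMz : ∀ i j, i ≠ j → 0 ≤ A i j)
    (hH : ∀ μ ∈ spectrum ℂ (A.map Complex.ofReal), μ.re < 0) :
    IsUnit A.det ∧ ∀ i j, A⁻¹ i j ≤ 0 := by
  set Ac := A.map Complex.ofReal with hAc
  -- A is invertible
  have h0 : (0 : ℂ) ∉ spectrum ℂ Ac := fun h => by simpa using hH 0 h
  rw [spectrum.notMem_iff] at h0
  rw [map_zero, zero_sub] at h0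
  have hAcUnit : IsUnit Ac := by simpa using h0.neg
  have hdetc : IsUnit Ac.det := (Matrix.isUnit_iff_isUnit_det _).mp hAcUnit
  have hdetmap : Ac.det = Complex.ofReal A.det := (RingHom.map_det Complex.ofRealHom A).symm
  have hdet : IsUnit A.det := by
    refine Ne.isUnit fun hz => ?_
    rw [hdetmap, hz] at hdetc
    simp at hdetc
  refine ⟨hdet, ?_⟩
  -- choose the shift c
  set c0 : ℝ := 1 + ∑ i, |A i i| with hc0
  have hc0pos : 0 < c0 := by
    have : (0:ℝ) ≤ ∑ i, |A i i| := Finset.sum_nonneg fun i _ => abs_nonneg _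
    rw [hc0]; linarith
  have hc0diag : ∀ i, 0 ≤ A i i + c0 := by
    intro i
    have h1 : |A i i| ≤ ∑ j, |A j j| :=
      Finset.single_le_sum (f := fun j => |A j j|) (fun j _ => abs_nonneg _) (Finset.mem_univ i)
    have h2 : -A i i ≤ |A i i| := neg_le_abs _
    rw [hc0]; linarith
  obtain ⟨c, hcpos, hcdiag, hcspec⟩ : ∃ c : ℝ, 0 < c ∧ (∀ i, 0 ≤ A i i + c) ∧
      ∀ μ ∈ spectrum ℂ Ac, ‖μ + c‖ < c := by
    by_cases hne : (spectrum ℂ Ac).Nonempty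
    · have hcompact := spectrum.isCompact (𝕜 := ℂ) Ac
      obtain ⟨μ0, hμ0, hmin⟩ := hcompact.exists_isMinOn hne
        ((Complex.continuous_re.neg).continuousOn (s := spectrum ℂ Ac))
      obtain ⟨μ1, hμ1, hmax⟩ := hcompact.exists_isMaxOn hne
        (continuous_norm.continuousOn (s := spectrum ℂ Ac))
      set ε : ℝ := -μ0.re with hε
      have hεpos : 0 < ε := by
        have := hH μ0 hμ0; rw [hε]; linarith
      set nb : ℝ := ‖μ1‖ with hnb
      refine ⟨max c0 (nb ^ 2 / (2 * ε) + 1), lt_of_lt_of_le hc0pos (le_max_left _ _),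
        fun i => ?_, fun μ hμ => ?_⟩
      · have := hc0diag i
        have h2 := le_max_left c0 (nb ^ 2 / (2 * ε) + 1)
        linarith
      · set c := max c0 (nb ^ 2 / (2 * ε) + 1) with hcdef
        have hc1 : nb ^ 2 / (2 * ε) + 1 ≤ c := le_max_right _ _
        have hcpos : 0 < c := lt_of_lt_of_le hc0pos (le_max_left _ _)
        have hre : μ.re ≤ -ε := by
          have := hmin hμ
          simp only [Set.mem_setOf_eq, Pi.neg_apply] at this
          rw [hε]; linarith [this]
        have hnorm : ‖μ‖ ≤ nb := hmax hμ
        have hsq : ‖μ + (c : ℂ)‖ ^ 2 = ‖μ‖ ^ 2 + 2 * c * μ.re + c ^ 2 := by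
          rw [Complex.sq_norm, Complex.sq_norm,
            Complex.normSq_apply, Complex.normSq_apply]
          simp only [Complex.add_re, Complex.add_im, Complex.ofReal_re, Complex.ofReal_im]
          ring
        have hlt : ‖μ + (c : ℂ)‖ ^ 2 < c ^ 2 := by
          rw [hsq]
          have h3 : ‖μ‖ ^ 2 ≤ nb ^ 2 := by
            have := norm_nonneg μ
            nlinarith
          have h4 : nb ^ 2 < 2 * c * ε := by
            have h5 : nb ^ 2 / (2 * ε) < c := by linarith
            rw [div_lt_iff₀ (by linarith)] at h5
            nlinarith
          nlinarith
        nlinarith [norm_nonneg (μ + (c : ℂ))]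
    · exact ⟨c0, hc0pos, hc0diag, fun μ hμ => absurd ⟨μ, hμ⟩ hne⟩
  -- the nonneg matrix B
  set B : Matrix (Fin d) (Fin d) ℝ := A + c • (1 : Matrix (Fin d) (Fin d) ℝ) with hBdef
  have hB : ∀ i j, 0 ≤ B i j := by
    intro i j
    rw [hBdef, Matrix.add_apply, Matrix.smul_apply]
    by_cases h : i = j
    · subst h; rw [Matrix.one_apply_eq]; simpa using hcdiag i
    · rw [Matrix.one_apply_ne h]; simpa using hMz i j h
  have hBc : B.map Complex.ofReal = algebraMap ℂ (Matrix (Fin d) (Fin d) ℂ) (c : ℂ) + Ac := by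
    rw [Algebra.algebraMap_eq_smul_one]
    ext i j
    simp only [Matrix.map_apply, hBdef, hAc, Matrix.add_apply, Matrix.smul_apply,
      Matrix.one_apply, smul_eq_mul, mul_ite, mul_one, mul_zero, apply_ite Complex.ofReal]
    by_cases h : i = j
    · subst h
      simp only [if_pos rfl]
      push_cast
      ring
    · simp only [if_neg h]
      push_cast
      ring
  -- spectral radius of B is < c
  have hcnn : ‖((c : ℝ) : ℂ)‖₊ = ‖c‖₊ := by
    ext; simp [coe_nnnorm, Complex.norm_real]
  have hρB : spectralRadius ℂ (B.map Complex.ofReal) < (‖((c : ℝ) : ℂ)‖₊ : ℝ≥0∞) := by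
    have hshift : spectrum ℂ (B.map Complex.ofReal) = {(c : ℂ)} + spectrum ℂ Ac := by
      rw [hBc, spectrum.singleton_add_eq]
    have hbound : ∀ ν ∈ spectrum ℂ (B.map Complex.ofReal), ‖ν‖₊ < ‖((c : ℝ) : ℂ)‖₊ := by
      intro ν hν
      rw [hshift] at hν
      obtain ⟨x, hx, μ, hμ, rfl⟩ := Set.mem_add.mp hν
      rw [Set.mem_singleton_iff] at hx
      subst hx
      have hlt := hcspec μ hμ
      rw [← NNReal.coe_lt_coe, coe_nnnorm, coe_nnnorm, add_comm, Complex.norm_real,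
        Real.norm_eq_abs, abs_of_pos hcpos]
      exact hlt
    by_cases hne : (spectrum ℂ (B.map Complex.ofReal)).Nonempty
    · obtain ⟨ν, hν, hνr⟩ := spectrum.exists_nnnorm_eq_spectralRadius_of_nonempty hne
      rw [← hνr, ENNReal.coe_lt_coe]
      exact hbound ν hν
    · rw [Set.not_nonempty_iff_eq_empty] at hne
      have h1 : spectralRadius ℂ (B.map Complex.ofReal) = 0 := by simp [spectralRadius, hne]
      rw [h1, hcnn]
      have h2 : ‖c‖₊ ≠ 0 := by
        simp only [ne_eq, nnnorm_eq_zero]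
        exact hcpos.ne'
      exact ENNReal.coe_pos.mpr (pos_iff_ne_zero.mpr h2)
  -- resolvent at c is -A⁻¹ (up to map)
  obtain ⟨huA, -⟩ := resolvent_series hρB
  have hkey : algebraMap ℂ (Matrix (Fin d) (Fin d) ℂ) ((c : ℝ) : ℂ) - B.map Complex.ofReal
      = -Ac := by
    rw [hBc, sub_add_eq_sub_sub, sub_self, zero_sub]
  intro i j
  obtain ⟨t, ht0, hteq, -⟩ := resolvent_entries hB hρB hcpos i j
  -- Ac * (-(Ring.inverse (-Ac))) = 1
  set R := Ring.inverse (algebraMap ℂ (Matrix (Fin d) (Fin d) ℂ) ((c : ℝ) : ℂ)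
    - B.map Complex.ofReal) with hRdef
  have hmul : Ac * (-R) = 1 := by
    have h1 : (algebraMap ℂ (Matrix (Fin d) (Fin d) ℂ) ((c : ℝ) : ℂ) - B.map Complex.ofReal)
        * R = 1 := Ring.mul_inverse_cancel _ huA
    rw [hkey] at h1
    rw [← h1, neg_mul, mul_neg]
  have hmapinv : Ac * ((A⁻¹).map Complex.ofReal) = 1 := by
    have h1 : A * A⁻¹ = 1 := Matrix.mul_nonsing_inv A hdet
    have h2 := congrArg (φ (n := d)) h1
    rw [_root_.map_mul, _root_.map_one] at h2
    simpa [φ_apply, hAc] using h2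
  have huniq : (A⁻¹).map Complex.ofReal = -R := by
    have h1 := mul_eq_one_comm.mp hmapinv
    calc (A⁻¹).map Complex.ofReal = (A⁻¹).map Complex.ofReal * (Ac * (-R)) := by rw [hmul, mul_one]
      _ = ((A⁻¹).map Complex.ofReal * Ac) * (-R) := by rw [mul_assoc]
      _ = -R := by rw [h1, one_mul]
  have hentry : Complex.ofReal (A⁻¹ i j) = Complex.ofReal (-t) := by
    have h1 : ((A⁻¹).map Complex.ofReal) i j = (-R) i j := by rw [huniq]
    rw [Matrix.map_apply] at h1
    rw [h1, Matrix.neg_apply, hteq]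
    push_cast
    ring
  have := Complex.ofReal_inj.mp hentry
  rw [this]
  linarith

end Stmt12Helper

section Main

open Stmt12Helper

def Metzler {d : ℕ} (M : Matrix (Fin d) (Fin d) ℝ) : Prop :=
  ∀ i j, i ≠ j → 0 ≤ M i j

def HurwitzStable {d : ℕ} (M : Matrix (Fin d) (Fin d) ℝ) : Prop :=
  ∀ μ ∈ spectrum ℂ (M.map Complex.ofReal), μ.re < 0

theorem stmt12 {d m : ℕ} (A : Matrix (Fin d) (Fin d) ℝ)
    (hMz : Metzler A) (hH : HurwitzStable A)
    (S : Matrix (Fin d) (Fin m) ℝ) (W : Matrix (Fin m) (Fin d) ℝ)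
    (hS : ∀ i j, 0 ≤ S i j) (hW : ∀ i j, 0 ≤ W i j) :
    (∀ i j, 0 ≤ (-(W * A⁻¹ * S)) i j) ∧
    ((∀ dv : Fin m → ℝ, (∀ i, 0 < dv i) →
        0 < (1 - Matrix.diagonal dv * (-(W * A⁻¹ * S))).det) ↔
      spectralRadius ℂ ((-(W * A⁻¹ * S)).map Complex.ofReal) = 0) := by
  classical
  obtain ⟨hdet, hinv⟩ := hurwitz_metzler_inv hMz hH
  set Mr : Matrix (Fin m) (Fin m) ℝ := -(W * A⁻¹ * S) with hMrdef
  have hMnn : ∀ i j, 0 ≤ Mr i j := by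
    intro i j
    rw [hMrdef, Matrix.neg_apply, neg_nonneg, Matrix.mul_apply]
    refine Finset.sum_nonpos fun l _ => ?_
    refine mul_nonpos_iff.mpr (Or.inr ⟨?_, hS l j⟩)
    rw [Matrix.mul_apply]
    exact Finset.sum_nonpos fun k _ =>
      mul_nonpos_iff.mpr (Or.inl ⟨hW i k, hinv k l⟩)
  refine ⟨hMnn, ?_, ?_⟩
  · -- forward direction
    intro hdetpos
    by_contra h0
    obtain ⟨hrpos, hrmem⟩ := perron_frobenius hMnn h0
    set r : ℝ := (spectralRadius ℂ (Mr.map Complex.ofReal)).toReal with hrdef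
    have hnu : ¬ IsUnit (algebraMap ℂ (Matrix (Fin m) (Fin m) ℂ) (r : ℂ)
        - Mr.map Complex.ofReal) := spectrum.mem_iff.mp hrmem
    have hmapeq : (r • (1 : Matrix (Fin m) (Fin m) ℝ) - Mr).map Complex.ofReal
        = algebraMap ℂ (Matrix (Fin m) (Fin m) ℂ) (r : ℂ) - Mr.map Complex.ofReal := by
      rw [Algebra.algebraMap_eq_smul_one]
      ext i j
      simp only [Matrix.map_apply, Matrix.sub_apply, Matrix.smul_apply, Matrix.one_apply,
        smul_eq_mul, mul_ite, mul_one, mul_zero]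
      by_cases h : i = j
      · simp only [if_pos h]; push_cast; ring
      · simp only [if_neg h]; push_cast; ring
    have hdet0 : (r • (1 : Matrix (Fin m) (Fin m) ℝ) - Mr).det = 0 := by
      by_contra hne
      apply hnu
      rw [← hmapeq, Matrix.isUnit_iff_isUnit_det]
      have h1 : ((r • (1 : Matrix (Fin m) (Fin m) ℝ) - Mr).map Complex.ofReal).det
          = Complex.ofReal ((r • (1 : Matrix (Fin m) (Fin m) ℝ) - Mr).det) :=
        (RingHom.map_det Complex.ofRealHom _).symm
      rw [h1]
      exact Ne.isUnit (by exact_mod_cast hne)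
    have hdv := hdetpos (fun _ => r⁻¹) (fun _ => inv_pos.mpr hrpos)
    have hdiag : Matrix.diagonal (fun _ : Fin m => r⁻¹) * Mr = r⁻¹ • Mr := by
      ext i j; rw [Matrix.diagonal_mul, Matrix.smul_apply, smul_eq_mul]
    have hfac : (1 : Matrix (Fin m) (Fin m) ℝ) - r⁻¹ • Mr
        = r⁻¹ • (r • (1 : Matrix (Fin m) (Fin m) ℝ) - Mr) := by
      rw [smul_sub, smul_smul, inv_mul_cancel₀ hrpos.ne', one_smul]
    rw [hdiag, hfac, Matrix.det_smul, hdet0, mul_zero] at hdv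
    exact lt_irrefl 0 hdv
  · -- reverse direction
    intro h0 dv hdv
    set N : Matrix (Fin m) (Fin m) ℝ := Matrix.diagonal dv * Mr with hNdef
    have hNnn : ∀ i j, 0 ≤ N i j := by
      intro i j
      rw [hNdef, Matrix.diagonal_mul]
      exact mul_nonneg (hdv i).le (hMnn i j)
    set c : ℝ := 1 + ∑ i, dv i with hcdef
    have hsum0 : (0:ℝ) ≤ ∑ i, dv i := Finset.sum_nonneg fun i _ => (hdv i).le
    have hcpos : 0 < c := by rw [hcdef]; linarith
    have hdvc : ∀ i, dv i ≤ c := by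
      intro i
      have h1 : dv i ≤ ∑ j, dv j :=
        Finset.single_le_sum (f := fun j => dv j) (fun j _ => (hdv j).le) (Finset.mem_univ i)
      rw [hcdef]; linarith
    have hNle : ∀ i j, N i j ≤ (c • Mr) i j := by
      intro i j
      rw [hNdef, Matrix.diagonal_mul, Matrix.smul_apply, smul_eq_mul]
      exact mul_le_mul_of_nonneg_right (hdvc i) (hMnn i j)
    have hρN : spectralRadius ℂ (N.map Complex.ofReal) = 0 := by
      have h1 := spectralRadius_mono hNnn hNle
      have h2 : (c • Mr).map Complex.ofReal = (c : ℂ) • (Mr.map Complex.ofReal) := by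
        ext i j
        simp only [Matrix.map_apply, Matrix.smul_apply, smul_eq_mul]
        push_cast; ring
      rw [h2] at h1
      have h3 := spectralRadius_smul_le (c : ℂ) (Mr.map Complex.ofReal)
      rw [h0, mul_zero] at h3
      exact le_antisymm ((h1.trans h3)) zero_le
    have hspec : ∀ z ∈ spectrum ℂ (N.map Complex.ofReal), z = 0 := by
      intro z hz
      have h1 : (‖z‖₊ : ℝ≥0∞) ≤ spectralRadius ℂ (N.map Complex.ofReal) :=
        le_iSup₂ (α := ℝ≥0∞) z hz
      rw [hρN, nonpos_iff_eq_zero, ENNReal.coe_eq_zero, nnnorm_eq_zero] at h1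
      exact h1
    -- every 1 - t • N is invertible over ℂ
    have hunit : ∀ t : ℝ,
        IsUnit ((1 : Matrix (Fin m) (Fin m) ℂ) - (t : ℂ) • N.map Complex.ofReal) := by
      intro t
      by_cases ht : t = 0
      · subst ht; simp only [Complex.ofReal_zero, zero_smul, sub_zero]; exact isUnit_one
      have htC : (t : ℂ) ≠ 0 := by exact_mod_cast ht
      have hz : ((t : ℂ)⁻¹) ∉ spectrum ℂ (N.map Complex.ofReal) := by
        intro hmem
        exact (inv_ne_zero htC) (hspec _ hmem)
      have hu1 : IsUnit (algebraMap ℂ (Matrix (Fin m) (Fin m) ℂ) ((t : ℂ)⁻¹)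
          - N.map Complex.ofReal) := spectrum.notMem_iff.mp hz
      have hu2 : IsUnit ((t : ℂ) • (1 : Matrix (Fin m) (Fin m) ℂ)) := by
        rw [← Algebra.algebraMap_eq_smul_one]
        exact (isUnit_iff_ne_zero.mpr htC).map (algebraMap ℂ (Matrix (Fin m) (Fin m) ℂ))
      have hfact : (1 : Matrix (Fin m) (Fin m) ℂ) - (t : ℂ) • N.map Complex.ofReal
          = ((t : ℂ) • (1 : Matrix (Fin m) (Fin m) ℂ))
            * (algebraMap ℂ (Matrix (Fin m) (Fin m) ℂ) ((t : ℂ)⁻¹) - N.map Complex.ofReal) := by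
        rw [Algebra.algebraMap_eq_smul_one, mul_sub, smul_mul_assoc, one_mul, smul_smul,
          mul_inv_cancel₀ htC, one_smul, smul_mul_assoc, one_mul]
      rw [hfact]
      exact hu2.mul hu1
    -- the real determinant of 1 - t • N never vanishes
    have hg : ∀ t : ℝ, ((1 : Matrix (Fin m) (Fin m) ℝ) - t • N).det ≠ 0 := by
      intro t
      have hmapeq : ((1 : Matrix (Fin m) (Fin m) ℝ) - t • N).map Complex.ofReal
          = (1 : Matrix (Fin m) (Fin m) ℂ) - (t : ℂ) • N.map Complex.ofReal := by
        ext i j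
        simp only [Matrix.map_apply, Matrix.sub_apply, Matrix.smul_apply, Matrix.one_apply,
          smul_eq_mul, mul_ite, mul_one, mul_zero]
        by_cases h : i = j
        · simp only [if_pos h]; push_cast; ring
        · simp only [if_neg h]; push_cast; ring
      have h1 : IsUnit (((1 : Matrix (Fin m) (Fin m) ℝ) - t • N).map Complex.ofReal).det := by
        rw [hmapeq]
        exact (Matrix.isUnit_iff_isUnit_det _).mp (hunit t)
      have h2 : (((1 : Matrix (Fin m) (Fin m) ℝ) - t • N).map Complex.ofReal).det
          = Complex.ofReal (((1 : Matrix (Fin m) (Fin m) ℝ) - t • N).det) :=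
        (RingHom.map_det Complex.ofRealHom _).symm
      intro hz
      rw [h2, hz] at h1
      simp at h1
    -- intermediate value theorem
    have hcont : Continuous fun t : ℝ => ((1 : Matrix (Fin m) (Fin m) ℝ) - t • N).det :=
      (continuous_const.sub (continuous_id.smul continuous_const)).matrix_det
    have hg0 : ((1 : Matrix (Fin m) (Fin m) ℝ) - (0 : ℝ) • N).det = 1 := by simp
    by_contra hcon
    push_neg at hcon
    have hle : ((1 : Matrix (Fin m) (Fin m) ℝ) - (1 : ℝ) • N).det ≤ 0 := by
      have : (1 : Matrix (Fin m) (Fin m) ℝ) - (1 : ℝ) • N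
          = 1 - Matrix.diagonal dv * Mr := by rw [one_smul, hNdef]
      rw [this]
      exact hcon
    obtain ⟨t, -, ht⟩ := intermediate_value_Icc' (by norm_num : (0:ℝ) ≤ 1)
      (hcont.continuousOn) (Set.mem_Icc.mpr ⟨hle, by rw [hg0]; norm_num⟩)
    exact hg t ht

end Main
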